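/- For every real number q with q > 0 and q ≠ 1 and all natural numbers s and r, the following summation identity holds: Σ_{k=0}^{r} ((q^{−r};q)_k / (q;q)_k) · q^{s+k} / (s+k+1)_q = q^{sr+s+r} · (s)_q! (r)_q! / ((s+r)_q! · (s+r+1)_q). (This is the identity obtained from the paper's equation (5.7) by writing j+m = s and j−m = r.) -/

import Mathlib

/-- The q-shifted factorial `(a;q)_n = ∏_{i=0}^{n-1} (1 - a q^i)`. -/
def qPoch (a q : ℝ) (n : ℕ) : ℝ := ∏ i ∈ Finset.range n, (1 - a * q ^ i)

/-- The q-number `(n)_q = (1 - q^n)/(1 - q)`. -/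
noncomputable def qNum (q : ℝ) (n : ℕ) : ℝ := (1 - q ^ n) / (1 - q)

/-- The q-factorial `(n)_q! = ∏_{i=1}^{n} (i)_q`, with `(0)_q! = 1`. -/
noncomputable def qFact (q : ℝ) (n : ℕ) : ℝ := ∏ i ∈ Finset.range n, qNum q (i + 1)

lemma pow_ne_one' {q : ℝ} (hq : 0 < q) (hq1 : q ≠ 1) {m : ℕ} (hm : m ≠ 0) : q ^ m ≠ 1 := by
  rcases lt_or_gt_of_ne hq1 with h | h
  · exact ne_of_lt (pow_lt_one₀ (le_of_lt hq) h hm)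
  · exact ne_of_gt (one_lt_pow₀ h hm)

lemma qPoch_succ (a q : ℝ) (n : ℕ) : qPoch a q (n+1) = qPoch a q n * (1 - a * q^n) :=
  Finset.prod_range_succ _ _

lemma qPoch_succ' (a q : ℝ) (n : ℕ) : qPoch a q (n+1) = (1 - a) * qPoch (a*q) q n := by
  rw [qPoch, Finset.prod_range_succ']
  simp only [pow_zero, mul_one]
  rw [mul_comm]
  congr 1
  refine Finset.prod_congr rfl fun i _ => ?_
  rw [pow_succ']
  ring

lemma qPoch_q_ne_zero {q : ℝ} (hq : 0 < q) (hq1 : q ≠ 1) (k : ℕ) : qPoch q q k ≠ 0 := by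
  rw [qPoch]
  refine Finset.prod_ne_zero_iff.2 fun i _ => ?_
  have : q * q ^ i = q ^ (i+1) := by ring
  rw [this]
  exact sub_ne_zero.2 (Ne.symm (pow_ne_one' hq hq1 (Nat.succ_ne_zero i)))

lemma czero {q : ℝ} (hq : q ≠ 0) (r : ℕ) : qPoch (q ^ (-(r : ℤ))) q (r+1) = 0 := by
  rw [qPoch]
  refine Finset.prod_eq_zero (Finset.self_mem_range_succ r) ?_
  have : q ^ (-(r:ℤ)) * q ^ r = 1 := by
    rw [← zpow_natCast q r, ← zpow_add₀ hq]
    simp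
  rw [this]; ring

lemma crec {q : ℝ} (hq : 0 < q) (hq1 : q ≠ 1) (r k : ℕ) :
    qPoch (q ^ (-((r:ℤ)+1))) q (k+1) / qPoch q q (k+1)
      = qPoch (q ^ (-(r:ℤ))) q (k+1) / qPoch q q (k+1)
        - q ^ (-((r:ℤ)+1)) * (qPoch (q ^ (-(r:ℤ))) q k / qPoch q q k) := by
  have hq0 : q ≠ 0 := ne_of_gt hq
  have haq : q ^ (-((r:ℤ)+1)) * q = q ^ (-(r:ℤ)) := by
    have h := zpow_add₀ hq0 (-((r:ℤ)+1)) 1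
    rw [zpow_one] at h
    rw [← h]; ring_nf
  rw [← haq, qPoch_succ' _ q k, qPoch_succ, qPoch_succ]
  have h1 : qPoch q q k ≠ 0 := qPoch_q_ne_zero hq hq1 k
  have h2 : (1 : ℝ) - q * q ^ k ≠ 0 := by
    have : q * q ^ k = q ^ (k+1) := by ring
    rw [this]
    exact sub_ne_zero.2 (Ne.symm (pow_ne_one' hq hq1 (Nat.succ_ne_zero k)))
  field_simp
  ring

lemma alg_step (q t P G : ℝ) (r : ℕ) (hq0 : q ≠ 0) (hP : P ≠ 0) (h0 : 1-t ≠ 0)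
    (htop : 1 - t*q^(r+1) ≠ 0) :
    t^(r+1) * G / P - (q^(r+1))⁻¹ * ((t*q)^(r+1) * G / (P * (1 - t*q^(r+1)) / (1-t)))
      = t^(r+1+1) * (G * (1 - q * q^r)) / (P * (1 - t*q^(r+1))) := by
  have hqr : q^(r+1) ≠ 0 := pow_ne_zero _ hq0
  rw [← pow_succ']
  generalize hA : 1 - t*q^(r+1) = A at *
  field_simp
  rw [← hA]
  ring

lemma key {q : ℝ} (hq : 0 < q) (hq1 : q ≠ 1) :
    ∀ (r : ℕ) (t : ℝ), (∀ k, k ≤ r → 1 - t * q ^ k ≠ 0) →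
    ∑ k ∈ Finset.range (r+1), (qPoch (q ^ (-(r:ℤ))) q k / qPoch q q k) * (t * q^k) / (1 - t*q^k)
      = t^(r+1) * qPoch q q r / ∏ k ∈ Finset.range (r+1), (1 - t*q^k) := by
  intro r
  induction r with
  | zero =>
    intro t ht
    simp [qPoch]
  | succ r ih =>
    intro t ht
    have hq0 : q ≠ 0 := ne_of_gt hq
    have hcast : qPoch (q ^ (-((r+1 : ℕ):ℤ))) q = qPoch (q ^ (-((r:ℤ)+1))) q := by
      norm_cast
    rw [hcast]
    -- abbreviations
    have ht' : ∀ k, k ≤ r → 1 - t * q ^ k ≠ 0 := fun k hk => ht k (Nat.le_succ_of_le hk)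
    have htq : ∀ k, k ≤ r → 1 - (t*q) * q ^ k ≠ 0 := by
      intro k hk
      have h1 : (t*q) * q ^ k = t * q ^ (k+1) := by ring
      rw [h1]
      exact ht (k+1) (Nat.succ_le_succ hk)
    have step : ∀ i ∈ Finset.range (r+1),
        (qPoch (q ^ (-((r:ℤ)+1))) q (i+1) / qPoch q q (i+1)) * (t * q^(i+1)) / (1 - t*q^(i+1))
          = (qPoch (q ^ (-(r:ℤ))) q (i+1) / qPoch q q (i+1)) * (t * q^(i+1)) / (1 - t*q^(i+1))
            - q ^ (-((r:ℤ)+1)) *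
              ((qPoch (q ^ (-(r:ℤ))) q i / qPoch q q i) * ((t*q) * q^i) / (1 - (t*q)*q^i)) := by
      intro i _
      rw [crec hq hq1 r i]
      have h1 : (t*q) * q ^ i = t * q ^ (i+1) := by ring
      rw [h1]
      ring
    calc ∑ k ∈ Finset.range (r+1+1),
          (qPoch (q ^ (-((r:ℤ)+1))) q k / qPoch q q k) * (t * q^k) / (1 - t*q^k)
        = (∑ i ∈ Finset.range (r+1),
            (qPoch (q ^ (-((r:ℤ)+1))) q (i+1) / qPoch q q (i+1)) * (t * q^(i+1)) / (1 - t*q^(i+1)))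
          + (qPoch (q ^ (-((r:ℤ)+1))) q 0 / qPoch q q 0) * (t * q^0) / (1 - t*q^0) :=
          Finset.sum_range_succ' _ (r+1)
      _ = (∑ i ∈ Finset.range (r+1),
            ((qPoch (q ^ (-(r:ℤ))) q (i+1) / qPoch q q (i+1)) * (t * q^(i+1)) / (1 - t*q^(i+1))
              - q ^ (-((r:ℤ)+1)) *
                ((qPoch (q ^ (-(r:ℤ))) q i / qPoch q q i) * ((t*q) * q^i) / (1 - (t*q)*q^i))))
          + (qPoch (q ^ (-(r:ℤ))) q 0 / qPoch q q 0) * (t * q^0) / (1 - t*q^0) := by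
          rw [Finset.sum_congr rfl step]
          simp [qPoch]
      _ = ((∑ i ∈ Finset.range (r+1),
            (qPoch (q ^ (-(r:ℤ))) q (i+1) / qPoch q q (i+1)) * (t * q^(i+1)) / (1 - t*q^(i+1)))
          + (qPoch (q ^ (-(r:ℤ))) q 0 / qPoch q q 0) * (t * q^0) / (1 - t*q^0))
          - q ^ (-((r:ℤ)+1)) *
            (∑ i ∈ Finset.range (r+1),
              (qPoch (q ^ (-(r:ℤ))) q i / qPoch q q i) * ((t*q) * q^i) / (1 - (t*q)*q^i)) := by
          rw [Finset.sum_sub_distrib, ← Finset.mul_sum]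
          ring
      _ = (∑ k ∈ Finset.range (r+2),
            (qPoch (q ^ (-(r:ℤ))) q k / qPoch q q k) * (t * q^k) / (1 - t*q^k))
          - q ^ (-((r:ℤ)+1)) *
            ((t*q)^(r+1) * qPoch q q r / ∏ k ∈ Finset.range (r+1), (1 - (t*q)*q^k)) := by
          rw [← Finset.sum_range_succ' (fun k =>
            (qPoch (q ^ (-(r:ℤ))) q k / qPoch q q k) * (t * q^k) / (1 - t*q^k)) (r+1)]
          rw [ih (t*q) htq]
      _ = (t^(r+1) * qPoch q q r / ∏ k ∈ Finset.range (r+1), (1 - t*q^k))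
          - q ^ (-((r:ℤ)+1)) *
            ((t*q)^(r+1) * qPoch q q r / ∏ k ∈ Finset.range (r+1), (1 - (t*q)*q^k)) := by
          rw [Finset.sum_range_succ, czero hq0 r]
          rw [ih t ht']
          simp
      _ = t^(r+1+1) * qPoch q q (r+1) / ∏ k ∈ Finset.range (r+1+1), (1 - t*q^k) := by
          have h0 : (1:ℝ) - t ≠ 0 := by
            have := ht 0 (by omega); simpa using this
          have hP1 : (∏ k ∈ Finset.range (r+1), (1 - t*q^k)) ≠ 0 := by
            refine Finset.prod_ne_zero_iff.2 fun k hk => ht k ?_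
            exact Nat.le_of_lt_succ (Finset.mem_range.1 hk) |>.trans (Nat.le_succ r)
          have htop : (1:ℝ) - t * q^(r+1) ≠ 0 := ht (r+1) le_rfl
          have e1 : ∏ k ∈ Finset.range (r+1), (1-(t*q)*q^k)
              = ∏ k ∈ Finset.range (r+1), (1-t*q^(k+1)) :=
            Finset.prod_congr rfl (fun k _ => by rw [pow_succ']; ring)
          have hPs_eq : ∏ k ∈ Finset.range (r+1), (1-(t*q)*q^k)
              = (∏ k ∈ Finset.range (r+1), (1-t*q^k)) * (1-t*q^(r+1)) / (1-t) := by
            rw [e1, eq_div_iff h0]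
            have h3 := Finset.prod_range_succ' (fun k => 1 - t*q^k) (r+1)
            have h2 := Finset.prod_range_succ (fun k => 1 - t*q^k) (r+1)
            simp only [pow_zero, mul_one] at h3 h2
            rw [← h2, h3]
          have ha : q ^ (-((r:ℤ)+1)) = (q^(r+1) : ℝ)⁻¹ := by
            rw [← zpow_natCast q (r+1)]
            push_cast
            rw [← zpow_neg]
          have hqr : (q:ℝ)^(r+1) ≠ 0 := pow_ne_zero _ hq0
          rw [qPoch_succ, Finset.prod_range_succ (fun k => 1 - t*q^k) (r+1), hPs_eq, ha]
          exact alg_step q t _ (qPoch q q r) r hq0 hP1 h0 htop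


lemma qFact_eq {q : ℝ} (n : ℕ) : qFact q n = qPoch q q n / (1-q)^n := by
  rw [qFact, qPoch]
  have h : ∀ i ∈ Finset.range n, qNum q (i+1) = (1 - q * q^i) * ((1-q)⁻¹) := by
    intro i _
    rw [qNum, pow_succ', div_eq_mul_inv]
  rw [Finset.prod_congr rfl h, Finset.prod_mul_distrib, Finset.prod_const, Finset.card_range,
    div_eq_mul_inv, inv_pow]

lemma qPoch_split {q : ℝ} (s r : ℕ) :
    qPoch q q (s + (r+1)) = qPoch q q s * ∏ k ∈ Finset.range (r+1), (1 - q^(s+1) * q^k) := by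
  rw [qPoch, qPoch, Finset.prod_range_add]
  congr 1
  refine Finset.prod_congr rfl fun k _ => ?_
  rw [pow_add, pow_succ']
  ring

/-- the summation identity
`Σ_{k=0}^{r} ((q^{−r};q)_k/(q;q)_k) · q^{s+k}/(s+k+1)_q
  = q^{sr+s+r} (s)_q! (r)_q! / ((s+r)_q! (s+r+1)_q)`. -/
theorem q_sum_identity_factorial (q : ℝ) (hq : 0 < q) (hq1 : q ≠ 1) (s r : ℕ) :
    ∑ k ∈ Finset.range (r + 1),
        (qPoch (q ^ (-(r : ℤ))) q k / qPoch q q k) * q ^ (s + k) / qNum q (s + k + 1)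
      = q ^ (s * r + s + r) * (qFact q s * qFact q r) /
          (qFact q (s + r) * qNum q (s + r + 1)) := by
  have hq0 : q ≠ 0 := ne_of_gt hq
  have h1q : (1:ℝ) - q ≠ 0 := sub_ne_zero.2 (Ne.symm hq1)
  have hne : ∀ m : ℕ, m ≠ 0 → (1:ℝ) - q^m ≠ 0 :=
    fun m hm => sub_ne_zero.2 (Ne.symm (pow_ne_one' hq hq1 hm))
  have ht : ∀ k, k ≤ r → 1 - q^(s+1) * q^k ≠ 0 := by
    intro k hk
    have h : q^(s+1) * q^k = q^(s+1+k) := by rw [← pow_add]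
    rw [h]
    exact hne _ (by omega)
  have hterm : ∀ k ∈ Finset.range (r+1),
      (qPoch (q ^ (-(r : ℤ))) q k / qPoch q q k) * q ^ (s + k) / qNum q (s + k + 1)
        = ((1-q)/q) * ((qPoch (q ^ (-(r : ℤ))) q k / qPoch q q k) * (q^(s+1) * q^k)
            / (1 - q^(s+1)*q^k)) := by
    intro k _
    have hPk : qPoch q q k ≠ 0 := qPoch_q_ne_zero hq hq1 k
    rw [qNum]
    have e1 : q^(s+1) * q^k = q^(s+k+1) := by rw [← pow_add]; ring_nf
    rw [e1]
    have e2 : (1:ℝ) - q^(s+k+1) ≠ 0 := hne _ (by omega)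
    field_simp
    ring
  rw [Finset.sum_congr rfl hterm, ← Finset.mul_sum, key hq hq1 r (q^(s+1)) ht]
  -- closed forms
  have hGs : qPoch q q s ≠ 0 := qPoch_q_ne_zero hq hq1 s
  have hGr : qPoch q q r ≠ 0 := qPoch_q_ne_zero hq hq1 r
  have hGsr : qPoch q q (s+r) ≠ 0 := qPoch_q_ne_zero hq hq1 (s+r)
  have hD : ∏ k ∈ Finset.range (r+1), (1 - q^(s+1) * q^k)
      = qPoch q q (s+r) * (1 - q * q^(s+r)) / qPoch q q s := by
    rw [eq_div_iff hGs]
    have h1 : qPoch q q (s + (r+1)) = qPoch q q (s+r) * (1 - q * q^(s+r)) := by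
      rw [show s + (r+1) = (s+r)+1 from by omega, qPoch_succ]
    rw [← h1, qPoch_split s r]
    ring
  rw [hD, qFact_eq, qFact_eq, qFact_eq, qNum]
  have htop : (1:ℝ) - q^(s+r+1) ≠ 0 := hne _ (by omega)
  have e4 : (1:ℝ) - q^(s+r+1) = 1 - q * q^(s+r) := by rw [pow_succ]; ring
  rw [e4]
  have htop' : (1:ℝ) - q * q^(s+r) ≠ 0 := by rw [← e4]; exact htop
  have hp1 : ((1:ℝ)-q)^s ≠ 0 := pow_ne_zero _ h1q
  have hp2 : ((1:ℝ)-q)^r ≠ 0 := pow_ne_zero _ h1q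
  have hp3 : ((1:ℝ)-q)^(s+r) ≠ 0 := pow_ne_zero _ h1q
  field_simp
  ring
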